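/- In the braid group B_n (n ≥ 2), for all indices 1 ≤ p < q < r ≤ n, the pure braid generators satisfy a_{pr} a_{qr} a_{pq} = a_{qr} a_{pq} a_{pr} = a_{pq} a_{pr} a_{qr}. -/
import Mathlib


/-- The braid relations on generators `σ_1, …, σ_{n-1}` (generator `i : Fin (n-1)`
corresponds to `σ_{i+1}`): `σ_i σ_{i+1} σ_i = σ_{i+1} σ_i σ_{i+1}` and
`σ_i σ_j = σ_j σ_i` for `|i - j| ≥ 2`. -/
def braidRels (n : ℕ) : Set (FreeGroup (Fin (n - 1))) :=
  { r | (∃ i j : Fin (n - 1), (i : ℕ) + 1 = (j : ℕ) ∧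
          r = FreeGroup.of i * FreeGroup.of j * FreeGroup.of i *
              (FreeGroup.of j * FreeGroup.of i * FreeGroup.of j)⁻¹) ∨
        (∃ i j : Fin (n - 1), (i : ℕ) + 2 ≤ (j : ℕ) ∧
          r = FreeGroup.of i * FreeGroup.of j * (FreeGroup.of j * FreeGroup.of i)⁻¹) }

/-- The braid group `B_n`, presented on `σ_1, …, σ_{n-1}` with the braid relations. -/
abbrev BraidGroup (n : ℕ) := PresentedGroup (braidRels n)

/-- The braid generator `σ_k` (`1 ≤ k ≤ n-1`, 1-based); junk value `1` out of range. -/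
def braidSigma (n k : ℕ) : BraidGroup n :=
  if h : k - 1 < n - 1 then PresentedGroup.of (⟨k - 1, h⟩ : Fin (n - 1)) else 1

/-- The pure braid generator
`a_{ij} = (σ_{j-1} σ_{j-2} ⋯ σ_{i+1}) σ_i² (σ_{j-1} σ_{j-2} ⋯ σ_{i+1})⁻¹`. -/
def braidA (n i j : ℕ) : BraidGroup n :=
  ((List.range (j - 1 - i)).map (fun t => braidSigma n (j - 1 - t))).prod *
    (braidSigma n i) ^ 2 *
    (((List.range (j - 1 - i)).map (fun t => braidSigma n (j - 1 - t))).prod)⁻¹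

lemma braid_rel_one {n : ℕ} {r : FreeGroup (Fin (n - 1))} (h : r ∈ braidRels n) :
    PresentedGroup.mk (braidRels n) r = 1 :=
  (QuotientGroup.eq_one_iff r).2 (Subgroup.subset_normalClosure h)

lemma braidSigma_eq_of {n k : ℕ} (h : k - 1 < n - 1) :
    braidSigma n k = PresentedGroup.of (⟨k - 1, h⟩ : Fin (n - 1)) := dif_pos h

lemma sigma_braid (n k : ℕ) (h1 : 1 ≤ k) (h2 : k + 1 ≤ n - 1) :
    braidSigma n k * braidSigma n (k + 1) * braidSigma n k =
      braidSigma n (k + 1) * braidSigma n k * braidSigma n (k + 1) := by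
  have hk : k - 1 < n - 1 := by omega
  have hk' : k + 1 - 1 < n - 1 := by omega
  set i : Fin (n - 1) := ⟨k - 1, hk⟩
  set j : Fin (n - 1) := ⟨k + 1 - 1, hk'⟩
  have hmem : FreeGroup.of i * FreeGroup.of j * FreeGroup.of i *
      (FreeGroup.of j * FreeGroup.of i * FreeGroup.of j)⁻¹ ∈ braidRels n :=
    Or.inl ⟨i, j, by simp [i, j]; omega, rfl⟩
  have h := braid_rel_one hmem
  rw [map_mul, map_mul, map_inv, map_mul, map_mul, mul_inv_eq_one] at h
  rw [braidSigma_eq_of hk, braidSigma_eq_of hk']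
  exact h

lemma sigma_comm (n a b : ℕ) (h1 : 1 ≤ a) (hab : a + 2 ≤ b) :
    Commute (braidSigma n a) (braidSigma n b) := by
  by_cases hb : b - 1 < n - 1
  · have ha : a - 1 < n - 1 := by omega
    set i : Fin (n - 1) := ⟨a - 1, ha⟩
    set j : Fin (n - 1) := ⟨b - 1, hb⟩
    have hmem : FreeGroup.of i * FreeGroup.of j *
        (FreeGroup.of j * FreeGroup.of i)⁻¹ ∈ braidRels n :=
      Or.inr ⟨i, j, by simp [i, j]; omega, rfl⟩
    have h := braid_rel_one hmem
    rw [map_mul, map_inv, map_mul, mul_inv_eq_one] at h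
    rw [braidSigma_eq_of ha, braidSigma_eq_of hb]
    exact h
  · rw [show braidSigma n b = 1 from dif_neg hb]
    exact Commute.one_right _

/-- The descending product `σ_{b-1} σ_{b-2} ⋯ σ_{a+1}`. -/
def braidW (n a b : ℕ) : BraidGroup n :=
  ((List.range (b - 1 - a)).map (fun t => braidSigma n (b - 1 - t))).prod

lemma braidW_eq_one {n a b : ℕ} (h : b ≤ a + 1) : braidW n a b = 1 := by
  unfold braidW
  rw [show b - 1 - a = 0 by omega]
  simp

lemma braidW_top {n a b : ℕ} (h : a + 1 < b) :
    braidW n a b = braidSigma n (b - 1) * braidW n a (b - 1) := by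
  unfold braidW
  rw [show b - 1 - a = (b - 1 - 1 - a) + 1 by omega, List.range_succ_eq_map]
  rw [List.map_cons, List.prod_cons, List.map_map]
  congr 1
  congr 1
  apply List.map_congr_left
  intro t _
  simp only [Function.comp_apply]
  congr 1
  omega

lemma braidW_bot {n a b : ℕ} (h : a + 1 < b) :
    braidW n a b = braidW n (a + 1) b * braidSigma n (a + 1) := by
  unfold braidW
  rw [show b - 1 - a = (b - 1 - (a + 1)) + 1 by omega, List.range_succ]
  rw [List.map_append, List.prod_append]
  simp only [List.map_cons, List.map_nil, List.prod_cons, List.prod_nil, mul_one]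
  congr 2
  omega

lemma braidW_split (n : ℕ) : ∀ d p q r : ℕ, q - p = d → 1 ≤ p → p < q → q < r →
    braidW n p r = braidW n q r * braidSigma n q * braidW n p q := by
  intro d
  induction d with
  | zero => intro p q r hd hp hpq hqr; omega
  | succ d ih =>
    intro p q r hd hp hpq hqr
    by_cases hpq1 : p + 1 = q
    · subst hpq1
      rw [braidW_bot (by omega : p + 1 < r), braidW_eq_one (le_refl (p + 1)), mul_one]
    · have h1 : p + 1 < q := by omega
      rw [braidW_bot (by omega : p + 1 < r), ih (p + 1) q r (by omega) (by omega) h1 hqr,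
        braidW_bot h1]
      group

lemma commute_sigma_W (n p q j : ℕ) (hj : q + 1 ≤ j) :
    Commute (braidSigma n j) (braidW n p q) := by
  apply Commute.list_prod_right
  intro y hy
  simp only [List.mem_map, List.mem_range] at hy
  obtain ⟨t, ht, rfl⟩ := hy
  by_cases hq : t < q - 1 - p
  · exact (sigma_comm n (q - 1 - t) j (by omega) (by omega)).symm
  · omega

lemma commute_W_sigma (n q r i : ℕ) (hi : 1 ≤ i) (hiq : i + 1 ≤ q) :
    Commute (braidW n q r) (braidSigma n i) := by
  apply Commute.list_prod_left
  intro y hy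
  simp only [List.mem_map, List.mem_range] at hy
  obtain ⟨t, ht, rfl⟩ := hy
  exact (sigma_comm n i (r - 1 - t) hi (by omega)).symm

section GroupAux

variable {G : Type*} [Group G]

lemma braid_h1 (x s : G) (hbr : x * s * x = s * x * s) :
    s⁻¹ * x * s = x * s * x⁻¹ := by
  apply mul_left_cancel (a := s)
  calc s * (s⁻¹ * x * s) = (x * s * x) * x⁻¹ := by group
    _ = (s * x * s) * x⁻¹ := by rw [hbr]
    _ = s * (x * s * x⁻¹) := by group

lemma braid_h2 (x s : G) (hbr : x * s * x = s * x * s) :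
    x⁻¹ * s⁻¹ * x = s * x⁻¹ * s⁻¹ := by
  apply mul_left_cancel (a := s * x)
  calc (s * x) * (x⁻¹ * s⁻¹ * x) = x := by group
    _ = (x * s * x) * (x⁻¹ * s⁻¹) := by group
    _ = (s * x * s) * (x⁻¹ * s⁻¹) := by rw [hbr]
    _ = (s * x) * (s * x⁻¹ * s⁻¹) := by group

lemma braid_aux1 (a b : G) (h : a * b * a = b * a * b) :
    a * (b * b) * a * (b * b) = (b * b) * a * (b * b) * a := by
  have L : a * (b * b) * a * (b * b) = (b * a * b) * (b * a * b) := by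
    calc a * (b * b) * a * (b * b) = a * b * (b * a * b) * b := by group
      _ = a * b * (a * b * a) * b := by rw [← h]
      _ = (a * b * a) * (b * a * b) := by group
      _ = (b * a * b) * (b * a * b) := by rw [h]
  have R : (b * b) * a * (b * b) * a = (b * a * b) * (b * a * b) := by
    calc (b * b) * a * (b * b) * a = b * (b * a * b) * (b * a) := by group
      _ = b * (a * b * a) * (b * a) := by rw [← h]
      _ = (b * a * b) * (a * b * a) := by group
      _ = (b * a * b) * (b * a * b) := by rw [h]
  exact L.trans R.symm

lemma braid_aux2 (x s g : G) (hbr : x * s * x = s * x * s)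
    (hc : Commute x g) (hih : s * g * s * g = g * s * g * s) :
    x * (s * g * s⁻¹) * x * (s * g * s⁻¹) = (s * g * s⁻¹) * x * (s * g * s⁻¹) * x := by
  have h1 := braid_h1 x s hbr
  have h2 := braid_h2 x s hbr
  have hcx : x * g = g * x := hc.eq
  have hc' : x⁻¹ * g = g * x⁻¹ := hc.inv_left.eq
  have L : x * (s * g * s⁻¹) * x * (s * g * s⁻¹)
      = (s * x * s) * (g * s * g) * (x⁻¹ * s⁻¹) := by
    calc x * (s * g * s⁻¹) * x * (s * g * s⁻¹)
        = x * s * g * (s⁻¹ * x * s) * g * s⁻¹ := by group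
      _ = x * s * g * (x * s * x⁻¹) * g * s⁻¹ := by rw [h1]
      _ = x * s * (g * x) * s * (x⁻¹ * g) * s⁻¹ := by group
      _ = x * s * (x * g) * s * (g * x⁻¹) * s⁻¹ := by rw [← hcx, hc']
      _ = (x * s * x) * (g * s * g) * (x⁻¹ * s⁻¹) := by group
      _ = (s * x * s) * (g * s * g) * (x⁻¹ * s⁻¹) := by rw [hbr]
  have R : (s * g * s⁻¹) * x * (s * g * s⁻¹) * x
      = (s * x * s) * (g * s * g) * (x⁻¹ * s⁻¹) := by
    calc (s * g * s⁻¹) * x * (s * g * s⁻¹) * x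
        = s * g * (s⁻¹ * x * s) * g * (s⁻¹ * x) := by group
      _ = s * g * (x * s * x⁻¹) * g * (s⁻¹ * x) := by rw [h1]
      _ = s * (g * x) * s * (x⁻¹ * g) * (s⁻¹ * x) := by group
      _ = s * (x * g) * s * (g * x⁻¹) * (s⁻¹ * x) := by rw [← hcx, hc']
      _ = s * x * (g * s * g) * (x⁻¹ * s⁻¹ * x) := by group
      _ = s * x * (g * s * g) * (s * x⁻¹ * s⁻¹) := by rw [h2]
      _ = s * x * (g * s * g * s) * (x⁻¹ * s⁻¹) := by group
      _ = s * x * (s * g * s * g) * (x⁻¹ * s⁻¹) := by rw [← hih]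
      _ = (s * x * s) * (g * s * g) * (x⁻¹ * s⁻¹) := by group
  exact L.trans R.symm

lemma braid_aux3 (x b : G) (h : x * b * x * b = b * x * b * x) :
    (x * b * x⁻¹) * (x * x) * b = (x * x) * b * (x * b * x⁻¹)
      ∧ (x * x) * b * (x * b * x⁻¹) = b * (x * b * x⁻¹) * (x * x) := by
  have L : (x * b * x⁻¹) * (x * x) * b = x * b * x * b := by group
  have R : (x * x) * b * (x * b * x⁻¹) = x * b * x * b := by
    calc (x * x) * b * (x * b * x⁻¹) = x * (x * b * x * b) * x⁻¹ := by group
      _ = x * (b * x * b * x) * x⁻¹ := by rw [h]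
      _ = x * b * x * b := by group
  have S : b * (x * b * x⁻¹) * (x * x) = b * x * b * x := by group
  exact ⟨L.trans R.symm, R.trans (h.trans S.symm)⟩

lemma braid_conj_aux (C u v w u' v' w' : G) (h : u * v * w = u' * v' * w') :
    (C * u * C⁻¹) * (C * v * C⁻¹) * (C * w * C⁻¹)
      = (C * u' * C⁻¹) * (C * v' * C⁻¹) * (C * w' * C⁻¹) := by
  have key : ∀ a b c : G, (C * a * C⁻¹) * (C * b * C⁻¹) * (C * c * C⁻¹)
      = C * (a * b * c) * C⁻¹ := by intros; group
  rw [key, key, h]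

end GroupAux

lemma braid_core (n p : ℕ) (hp : 1 ≤ p) :
    ∀ q, p + 1 ≤ q → q ≤ n - 1 →
      braidSigma n q * (braidW n p q * braidSigma n p ^ 2 * (braidW n p q)⁻¹) *
          braidSigma n q * (braidW n p q * braidSigma n p ^ 2 * (braidW n p q)⁻¹) =
        (braidW n p q * braidSigma n p ^ 2 * (braidW n p q)⁻¹) * braidSigma n q *
          (braidW n p q * braidSigma n p ^ 2 * (braidW n p q)⁻¹) * braidSigma n q := by
  intro q hq
  induction q, hq using Nat.le_induction with
  | base =>
    intro hqn
    rw [braidW_eq_one (le_refl (p + 1))]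
    simp only [one_mul, inv_one, mul_one]
    rw [pow_two]
    exact braid_aux1 _ _ (sigma_braid n p hp (by omega)).symm
  | succ q hq ih =>
    intro hqn
    have hbr := (sigma_braid n q (by omega) (by omega)).symm
    have hW : braidW n p (q + 1) = braidSigma n q * braidW n p q := by
      have h := braidW_top (n := n) (a := p) (b := q + 1) (by omega)
      simpa using h
    have hcW : Commute (braidSigma n (q + 1)) (braidW n p q) :=
      commute_sigma_W n p q (q + 1) (by omega)
    have hcσ : Commute (braidSigma n (q + 1)) (braidSigma n p ^ 2) :=
      (sigma_comm n p (q + 1) hp (by omega)).symm.pow_right 2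
    have hc : Commute (braidSigma n (q + 1))
        (braidW n p q * braidSigma n p ^ 2 * (braidW n p q)⁻¹) :=
      (hcW.mul_right hcσ).mul_right hcW.inv_right
    have hih := ih (by omega)
    have hb : braidW n p (q + 1) * braidSigma n p ^ 2 * (braidW n p (q + 1))⁻¹
        = braidSigma n q * (braidW n p q * braidSigma n p ^ 2 * (braidW n p q)⁻¹) *
            (braidSigma n q)⁻¹ := by
      rw [hW]; group
    rw [hb]
    exact braid_aux2 _ _ _ hbr hc hih

/-- In the braid group `B_n` (`n ≥ 2`), for `1 ≤ p < q < r ≤ n`,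
`a_{pr} a_{qr} a_{pq} = a_{qr} a_{pq} a_{pr} = a_{pq} a_{pr} a_{qr}`. -/
theorem braid_pure_triple (n : ℕ) (hn : 2 ≤ n) (p q r : ℕ)
    (hp : 1 ≤ p) (hpq : p < q) (hqr : q < r) (hr : r ≤ n) :
    braidA n p r * braidA n q r * braidA n p q =
      braidA n q r * braidA n p q * braidA n p r ∧
    braidA n q r * braidA n p q * braidA n p r =
      braidA n p q * braidA n p r * braidA n q r := by
  have core := braid_core n p hp q (by omega) (by omega)
  have hCB : Commute (braidW n q r) (braidW n p q) := by
    apply Commute.list_prod_right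
    intro y hy
    simp only [List.mem_map, List.mem_range] at hy
    obtain ⟨t, ht, rfl⟩ := hy
    exact commute_W_sigma n q r (q - 1 - t) (by omega) (by omega)
  have hCσp : Commute (braidW n q r) (braidSigma n p) := commute_W_sigma n q r p hp (by omega)
  have hCβ : Commute (braidW n q r)
      (braidW n p q * braidSigma n p ^ 2 * (braidW n p q)⁻¹) :=
    (hCB.mul_right (hCσp.pow_right 2)).mul_right hCB.inv_right
  have e1 : braidA n p q = braidW n q r *
      (braidW n p q * braidSigma n p ^ 2 * (braidW n p q)⁻¹) * (braidW n q r)⁻¹ := by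
    rw [hCβ.eq, mul_inv_cancel_right]
    rfl
  have e2 : braidA n q r = braidW n q r *
      (braidSigma n q * braidSigma n q) * (braidW n q r)⁻¹ := by
    show braidW n q r * braidSigma n q ^ 2 * (braidW n q r)⁻¹ = _
    rw [pow_two]
  have e3 : braidA n p r = braidW n q r *
      (braidSigma n q * (braidW n p q * braidSigma n p ^ 2 * (braidW n p q)⁻¹) *
        (braidSigma n q)⁻¹) * (braidW n q r)⁻¹ := by
    show braidW n p r * braidSigma n p ^ 2 * (braidW n p r)⁻¹ = _
    rw [braidW_split n (q - p) p q r rfl hp hpq hqr]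
    group
  have key := braid_aux3 (braidSigma n q)
    (braidW n p q * braidSigma n p ^ 2 * (braidW n p q)⁻¹) core
  rw [e1, e2, e3]
  constructor
  · exact braid_conj_aux _ _ _ _ _ _ _ key.1
  · exact braid_conj_aux _ _ _ _ _ _ _ key.2
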